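/- Let X be a transitive G-space such that: (1) every quotient G-space of X (i.e. every quotient X/E by a G-invariant equivalence relation E) has the semi-Hajós property, and (2) X admits no strictly increasing infinite sequence (E_n)_{n∈ω} of G-invariant equivalence relations. Then every kaleidoscopical configuration K ⊆ X is splittable. -/

import Mathlib

open Pointwise

universe u v

/-- An equivalence relation `E` on a `G`-space `X` is `G`-invariant. -/
def SetoidInvariant (G : Type v) [Group G] {X : Type u} [MulAction G X]
    (E : Setoid X) : Prop :=
  ∀ (g : G) (x y : X), E.r x y → E.r (g • x) (g • y)

/-- `K` is a kaleidoscopical configuration in the `G`-space `X`. -/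
def Kaleidoscopical (G : Type v) [Group G] {X : Type u} [MulAction G X]
    (K : Set X) : Prop :=
  ∃ (C : Type u) (χ : X → C), Function.Surjective χ ∧
    ∀ g : G, Set.BijOn χ (g • K) Set.univ

/-- `K` is `F/E`-parallel: `[K]_E ∩ [x]_F = [x]_F` for all `x ∈ K`. -/
def ParallelRel {X : Type u} (K : Set X) (E F : Setoid X) : Prop :=
  ∀ x ∈ K, {y | ∃ k ∈ K, E.r k y} ∩ {y | F.r x y} = {y | F.r x y}

/-- `K` is `F/E`-orthogonal: `[K]_E ∩ [x]_F = [x]_E` for all `x ∈ K`. -/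
def OrthogonalRel {X : Type u} (K : Set X) (E F : Setoid X) : Prop :=
  ∀ x ∈ K, {y | ∃ k ∈ K, E.r k y} ∩ {y | F.r x y} = {y | E.r x y}

/-- `K ⊆ X` is splittable: there is an increasing chain
`Δ_X = E_0 ⊆ E_1 ⊆ … ⊆ E_m = X × X` of `G`-invariant equivalence relations such that for
every `i < m` the set `K` is `E_{i+1}/E_i`-parallel or `E_{i+1}/E_i`-orthogonal. -/
def Splittable (G : Type v) [Group G] {X : Type u} [MulAction G X] (K : Set X) : Prop :=
  ∃ (m : ℕ) (E : Fin (m + 1) → Setoid X), Monotone E ∧ E 0 = ⊥ ∧ E (Fin.last m) = ⊤ ∧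
    (∀ i, SetoidInvariant G (E i)) ∧
    ∀ i : Fin m, ParallelRel K (E i.castSucc) (E i.succ) ∨
      OrthogonalRel K (E i.castSucc) (E i.succ)

/-- The projection `K/E` is a kaleidoscopical configuration in the quotient `G`-space
`X/E`. -/
def KaleidoscopicalQuot (G : Type v) [Group G] {X : Type u} [MulAction G X]
    (E : Setoid X) (K : Set X) : Prop :=
  ∃ (C : Type u) (χ : Quotient E → C), Function.Surjective χ ∧
    ∀ g : G, Set.BijOn χ (Quotient.mk E '' (g • K)) Set.univ

/-- `K` is `E`-saturated: `[K]_E = K`; such sets correspond to the subsets of the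
quotient `G`-space `X/E`. -/
def Saturated {X : Type u} (E : Setoid X) (K : Set X) : Prop :=
  ∀ x ∈ K, ∀ y, E.r x y → y ∈ K

/-- The quotient `G`-space `X/E` by a `G`-invariant equivalence relation `E` has the
semi-Hajós property.  Subsets of `X/E` are encoded by `E`-saturated subsets `K ⊆ X`,
`G`-invariant equivalence relations on `X/E` different from the diagonal correspond to
`G`-invariant equivalence relations `F` on `X` with `E ⊆ F`, `F ≠ E`, the relations
"`K/E` is `(F/E)`-parallel (orthogonal) in `X/E`" translate to "`K` is `F/E`-parallel
(orthogonal) in `X`", and the quotient `(X/E)/(F/E)` is `X/F`. -/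
def SemiHajosQuot (G : Type v) [Group G] {X : Type u} [MulAction G X]
    (E : Setoid X) : Prop :=
  ∀ K : Set X, Saturated E K → K ≠ Set.univ → KaleidoscopicalQuot G E K →
    ∃ F : Setoid X, E ≤ F ∧ F ≠ E ∧ SetoidInvariant G F ∧
      (ParallelRel K E F ∨ OrthogonalRel K E F) ∧ KaleidoscopicalQuot G F K


section Aux

variable {G : Type v} [Group G] {X : Type u} [MulAction G X]

/-- The `E`-saturation of `K`. -/
def satK {X : Type u} (E : Setoid X) (K : Set X) : Set X := {y | ∃ k ∈ K, E.r k y}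

/-- There is a splitting chain from `⊥` up to `F`. -/
def ChainTo (G : Type v) [Group G] {X : Type u} [MulAction G X] (K : Set X)
    (F : Setoid X) : Prop :=
  ∃ (m : ℕ) (E : Fin (m + 1) → Setoid X), Monotone E ∧ E 0 = ⊥ ∧ E (Fin.last m) = F ∧
    (∀ i, SetoidInvariant G (E i)) ∧
    ∀ i : Fin m, ParallelRel K (E i.castSucc) (E i.succ) ∨
      OrthogonalRel K (E i.castSucc) (E i.succ)

lemma inv_bot : SetoidInvariant G (⊥ : Setoid X) := by
  intro g x y h
  exact congrArg (g • ·) (h : x = y)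

lemma inv_top : SetoidInvariant G (⊤ : Setoid X) := fun _ _ _ _ => trivial

lemma chain_bot (K : Set X) : ChainTo G K (⊥ : Setoid X) :=
  ⟨0, fun _ => ⊥, monotone_const, rfl, rfl, fun _ => inv_bot, fun i => i.elim0⟩

lemma chain_extend {K : Set X} {E F : Setoid X} (hc : ChainTo G K E) (hEF : E ≤ F)
    (hFinv : SetoidInvariant G F)
    (hstep : ParallelRel K E F ∨ OrthogonalRel K E F) : ChainTo G K F := by
  obtain ⟨m, E', hmono, h0, hlast, hinv, hsteps⟩ := hc
  refine ⟨m + 1, Fin.snoc E' F, ?_, ?_, ?_, ?_, ?_⟩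
  · rw [Fin.monotone_iff_le_succ]
    intro i
    induction i using Fin.lastCases with
    | last =>
        rw [Fin.snoc_castSucc, Fin.succ_last, Fin.snoc_last, hlast]
        exact hEF
    | cast j =>
        rw [Fin.snoc_castSucc, Fin.succ_castSucc, Fin.snoc_castSucc]
        exact hmono (Fin.castSucc_lt_succ : j.castSucc < j.succ).le
  · have h00 : (0 : Fin (m + 1 + 1)) = (0 : Fin (m + 1)).castSucc := by simp
    rw [h00, Fin.snoc_castSucc, h0]
  · rw [Fin.snoc_last]
  · intro i
    induction i using Fin.lastCases with
    | last => rw [Fin.snoc_last]; exact hFinv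
    | cast j => rw [Fin.snoc_castSucc]; exact hinv _
  · intro i
    induction i using Fin.lastCases with
    | last =>
        rw [Fin.snoc_castSucc, Fin.succ_last, Fin.snoc_last, hlast]
        exact hstep
    | cast j =>
        rw [Fin.snoc_castSucc, Fin.succ_castSucc, Fin.snoc_castSucc]
        exact hsteps j

lemma classset_eq (E : Setoid X) (K : Set X) :
    {y | ∃ k ∈ satK E K, E.r k y} = {y | ∃ k ∈ K, E.r k y} := by
  ext y
  constructor
  · rintro ⟨k, ⟨k0, hk0, h01⟩, h⟩
    exact ⟨k0, hk0, E.iseqv.trans h01 h⟩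
  · rintro ⟨k, hk, h⟩
    exact ⟨k, ⟨k, hk, E.iseqv.refl k⟩, h⟩

lemma par_transfer {K : Set X} {E F : Setoid X} (h : ParallelRel (satK E K) E F) :
    ParallelRel K E F := by
  intro x hx
  rw [← classset_eq E K]
  exact h x ⟨x, hx, E.iseqv.refl x⟩

lemma orth_transfer {K : Set X} {E F : Setoid X} (h : OrthogonalRel (satK E K) E F) :
    OrthogonalRel K E F := by
  intro x hx
  rw [← classset_eq E K]
  exact h x ⟨x, hx, E.iseqv.refl x⟩

lemma sat_saturated (E : Setoid X) (K : Set X) : Saturated E (satK E K) := by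
  rintro x ⟨k, hk, hkx⟩ y hxy
  exact ⟨k, hk, E.iseqv.trans hkx hxy⟩

lemma quot_img (F : Setoid X) (hF : SetoidInvariant G F) (E : Setoid X) (hEF : E ≤ F)
    (K : Set X) (g : G) :
    Quotient.mk F '' (g • satK E K) = Quotient.mk F '' (g • K) := by
  apply subset_antisymm
  · rintro _ ⟨x, hx, rfl⟩
    obtain ⟨y, hy, rfl⟩ := Set.mem_smul_set.mp hx
    obtain ⟨k, hk, hky⟩ := hy
    refine ⟨g • k, Set.smul_mem_smul_set hk, ?_⟩
    exact Quotient.sound (hF g k y (Setoid.le_def.mp hEF hky))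
  · exact Set.image_mono (Set.smul_set_mono (fun k hk => ⟨k, hk, E.iseqv.refl k⟩))

lemma kquot_congr {F : Setoid X} {A B : Set X}
    (h : ∀ g : G, Quotient.mk F '' (g • A) = Quotient.mk F '' (g • B)) :
    KaleidoscopicalQuot G F A → KaleidoscopicalQuot G F B := by
  rintro ⟨C, χ, hs, hb⟩
  exact ⟨C, χ, hs, fun g => (h g) ▸ hb g⟩

lemma sat_bot (K : Set X) : satK (⊥ : Setoid X) K = K := by
  ext y
  constructor
  · rintro ⟨k, hk, h⟩
    exact (h : k = y) ▸ hk
  · intro h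
    exact ⟨y, h, rfl⟩

lemma kquot_bot {K : Set X} (hK : Kaleidoscopical G K) :
    KaleidoscopicalQuot G (⊥ : Setoid X) K := by
  obtain ⟨C, χ, hs, hb⟩ := hK
  refine ⟨C, Quotient.lift χ (fun a b (h : a = b) => h ▸ rfl), ?_, ?_⟩
  · intro c
    obtain ⟨x, rfl⟩ := hs c
    exact ⟨Quotient.mk ⊥ x, rfl⟩
  · intro g
    refine ⟨fun _ _ => trivial, ?_, ?_⟩
    · rintro _ ⟨a, ha, rfl⟩ _ ⟨b, hb', rfl⟩ h
      exact congrArg _ ((hb g).2.1 ha hb' h)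
    · intro c _
      obtain ⟨a, ha, hc⟩ := (hb g).2.2 (Set.mem_univ c)
      exact ⟨Quotient.mk ⊥ a, ⟨a, ha, rfl⟩, hc⟩

lemma par_top {K : Set X} {E : Setoid X} (hu : satK E K = Set.univ) :
    ParallelRel K E (⊤ : Setoid X) := by
  intro x _
  show satK E K ∩ _ = _
  rw [hu, Set.univ_inter]

end Aux

/-- Let `X` be a transitive `G`-space such that (1) every quotient
`G`-space of `X` has the semi-Hajós property, and (2) `X` admits no strictly increasing
infinite sequence of `G`-invariant equivalence relations. Then every kaleidoscopical
configuration `K ⊆ X` is splittable. -/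
theorem stmt18 {G : Type v} [Group G] {X : Type u} [MulAction G X]
    (htrans : ∀ x y : X, ∃ g : G, g • x = y)
    (h1 : ∀ E : Setoid X, SetoidInvariant G E → SemiHajosQuot G E)
    (h2 : ¬∃ E : ℕ → Setoid X, (∀ n, SetoidInvariant G (E n)) ∧ StrictMono E) :
    ∀ K : Set X, Kaleidoscopical G K → Splittable G K := by
  intro K hK
  by_contra hns
  set P : Setoid X → Prop := fun E =>
    SetoidInvariant G E ∧ ChainTo G K E ∧ KaleidoscopicalQuot G E (satK E K) with hP
  have hbotk : KaleidoscopicalQuot G (⊥ : Setoid X) (satK ⊥ K) := by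
    rw [sat_bot]; exact kquot_bot hK
  have hPbot : P ⊥ := ⟨inv_bot, chain_bot K, hbotk⟩
  have hstep : ∀ E : Setoid X, P E → ∃ F : Setoid X, P F ∧ E < F := by
    rintro E ⟨hEinv, hEchain, hEk⟩
    have hne : satK E K ≠ Set.univ := by
      intro hu
      exact hns (chain_extend hEchain le_top inv_top (Or.inl (par_top hu)))
    obtain ⟨F, hEF, hFne, hFinv, hpo, hFk⟩ :=
      h1 E hEinv (satK E K) (sat_saturated E K) hne hEk
    refine ⟨F, ⟨hFinv, chain_extend hEchain hEF hFinv ?_, ?_⟩,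
      lt_of_le_of_ne hEF (Ne.symm hFne)⟩
    · exact hpo.imp par_transfer orth_transfer
    · refine kquot_congr (fun g => ?_) hFk
      rw [quot_img F hFinv E hEF K g, quot_img F hFinv F le_rfl K g]
  have hstep' : ∀ e : {E : Setoid X // P E}, ∃ e' : {E : Setoid X // P E}, e.1 < e'.1 := by
    rintro ⟨E, hE⟩
    obtain ⟨F, hF, hlt⟩ := hstep E hE
    exact ⟨⟨F, hF⟩, hlt⟩
  choose nxt hnxt using hstep'
  set f : ℕ → {E : Setoid X // P E} := fun n => nxt^[n] ⟨⊥, hPbot⟩ with hf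
  refine h2 ⟨fun n => (f n).1, fun n => (f n).2.1, strictMono_nat_of_lt_succ fun n => ?_⟩
  have hsucc : f (n + 1) = nxt (f n) := Function.iterate_succ_apply' _ _ _
  rw [hsucc]
  exact hnxt (f n)
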